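/- Let f satisfy μ₀ ≤ f' ≤ μ₁ and μ₀ρ ≤ f(ρ) ≤ μ₁ρ for 0 < μ₀ ≤ μ₁. If φ ∈ C¹(0,1] is positive increasing with φ(1) = λ and satisfies η₀ τ(ρ) ≤ φ'(ρ) ≤ η₁ τ(ρ) where τ = f(φ)/f and 0 < η₀ ≤ η₁, then λ ρ^{c₁} ≤ φ(ρ) ≤ λ ρ^{c₀} for ρ ∈ (0,1], where c₀ = η₀ μ₀/μ₁ and c₁ = η₁ μ₁/μ₀. -/

import Mathlib

/-- if `μ₀ ≤ f' ≤ μ₁`, `μ₀ρ ≤ f(ρ) ≤ μ₁ρ` and the positive increasing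
`φ ∈ C¹(0,1]` with `φ(1) = λ` satisfies `η₀ τ ≤ φ' ≤ η₁ τ` where `τ = f(φ)/f`, then
`λ ρ^{c₁} ≤ φ(ρ) ≤ λ ρ^{c₀}` on `(0,1]` with `c₀ = η₀μ₀/μ₁`, `c₁ = η₁μ₁/μ₀`. -/
theorem stmt_17 (f : ℝ → ℝ) (μ₀ μ₁ : ℝ) (hμ₀ : 0 < μ₀) (hμ : μ₀ ≤ μ₁)
    (hf : ContDiff ℝ 1 f)
    (hf' : ∀ ρ ≥ (0:ℝ), μ₀ ≤ deriv f ρ ∧ deriv f ρ ≤ μ₁)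
    (hfb : ∀ ρ ≥ (0:ℝ), μ₀ * ρ ≤ f ρ ∧ f ρ ≤ μ₁ * ρ)
    (lam : ℝ) (hlam : 0 < lam) (η₀ η₁ : ℝ) (hη₀ : 0 < η₀) (hη : η₀ ≤ η₁)
    (φ φ' : ℝ → ℝ)
    (hφpos : ∀ ρ ∈ Set.Ioc (0:ℝ) 1, 0 < φ ρ)
    (hφd : ∀ ρ ∈ Set.Ioc (0:ℝ) 1, HasDerivAt φ (φ' ρ) ρ)
    (hφ1 : φ 1 = lam)
    (hφ'b : ∀ ρ ∈ Set.Ioc (0:ℝ) 1,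
      η₀ * (f (φ ρ) / f ρ) ≤ φ' ρ ∧ φ' ρ ≤ η₁ * (f (φ ρ) / f ρ)) :
    ∀ ρ ∈ Set.Ioc (0:ℝ) 1,
      lam * ρ ^ (η₁ * μ₁ / μ₀) ≤ φ ρ ∧ φ ρ ≤ lam * ρ ^ (η₀ * μ₀ / μ₁) := by
  have hμ₁ : 0 < μ₁ := lt_of_lt_of_le hμ₀ hμ
  have hη₁ : 0 < η₁ := lt_of_lt_of_le hη₀ hη
  set c₀ : ℝ := η₀ * μ₀ / μ₁ with hc₀
  set c₁ : ℝ := η₁ * μ₁ / μ₀ with hc₁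
  -- derivative of the auxiliary functions
  have hderiv : ∀ c : ℝ, ∀ x ∈ Set.Ioc (0:ℝ) 1,
      HasDerivAt (fun x => φ x * x ^ (-c))
        (φ' x * x ^ (-c) + φ x * (-c * x ^ (-c - 1))) x := by
    intro c x hx
    exact (hφd x hx).mul (Real.hasDerivAt_rpow_const (Or.inl (ne_of_gt hx.1)))
  -- bounds on τ
  have hfpos : ∀ x : ℝ, 0 < x → 0 < f x := fun x hx =>
    lt_of_lt_of_le (mul_pos hμ₀ hx) (hfb x hx.le).1
  have hτlb : ∀ x ∈ Set.Ioc (0:ℝ) 1, c₀ * (φ x / x) ≤ φ' x := by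
    intro x hx
    refine le_trans ?_ (hφ'b x hx).1
    have h1 : μ₀ * φ x / (μ₁ * x) ≤ f (φ x) / f x :=
      div_le_div₀ (hfpos _ (hφpos x hx)).le (hfb _ (hφpos x hx).le).1
        (hfpos x hx.1) (hfb x hx.1.le).2
    calc c₀ * (φ x / x) = η₀ * (μ₀ * φ x / (μ₁ * x)) := by
          rw [hc₀]; ring
      _ ≤ η₀ * (f (φ x) / f x) := by
          exact mul_le_mul_of_nonneg_left h1 hη₀.le
  have hτub : ∀ x ∈ Set.Ioc (0:ℝ) 1, φ' x ≤ c₁ * (φ x / x) := by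
    intro x hx
    refine le_trans (hφ'b x hx).2 ?_
    have h1 : f (φ x) / f x ≤ μ₁ * φ x / (μ₀ * x) := by
      refine div_le_div₀ (mul_nonneg hμ₁.le (hφpos x hx).le) (hfb _ (hφpos x hx).le).2
        (mul_pos hμ₀ hx.1) (hfb x hx.1.le).1
    calc η₁ * (f (φ x) / f x) ≤ η₁ * (μ₁ * φ x / (μ₀ * x)) :=
          mul_le_mul_of_nonneg_left h1 hη₁.le
      _ = c₁ * (φ x / x) := by rw [hc₁]; ring
  intro ρ hρ
  have hρ0 : (0:ℝ) < ρ := hρ.1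
  have hIcc : Set.Icc ρ 1 ⊆ Set.Ioc (0:ℝ) 1 := fun x hx =>
    ⟨lt_of_lt_of_le hρ0 hx.1, hx.2⟩
  have hIoo : Set.Ioo ρ 1 ⊆ Set.Ioc (0:ℝ) 1 := fun x hx =>
    ⟨lt_trans hρ0 hx.1, hx.2.le⟩
  have hcont : ∀ c : ℝ, ContinuousOn (fun x => φ x * x ^ (-c)) (Set.Icc ρ 1) :=
    fun c => fun x hx => ((hderiv c x (hIcc hx)).continuousAt).continuousWithinAt
  have hdiff : ∀ c : ℝ, DifferentiableOn ℝ (fun x => φ x * x ^ (-c))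
      (interior (Set.Icc ρ 1)) := by
    intro c
    rw [interior_Icc]
    exact fun x hx => ((hderiv c x (hIoo hx)).differentiableAt).differentiableWithinAt
  have key : ∀ c : ℝ, ∀ x ∈ Set.Ioc (0:ℝ) 1,
      deriv (fun x => φ x * x ^ (-c)) x
        = x ^ (-c) / x * (φ' x * x - c * φ x) := by
    intro c x hx
    rw [(hderiv c x hx).deriv]
    have hx0 : x ≠ 0 := ne_of_gt hx.1
    rw [Real.rpow_sub_one hx0]
    field_simp
    ring
  constructor
  · -- lower bound: φ x * x^(-c₁) antitone
    have hanti : AntitoneOn (fun x => φ x * x ^ (-c₁)) (Set.Icc ρ 1) := by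
      refine antitoneOn_of_deriv_nonpos (convex_Icc ρ 1) (hcont c₁) (hdiff c₁) ?_
      intro x hx
      rw [interior_Icc] at hx
      have hx' := hIoo hx
      rw [key c₁ x hx']
      have hx0 : (0:ℝ) < x := hx'.1
      have h1 : φ' x * x - c₁ * φ x ≤ 0 := by
        have := hτub x hx'
        rw [mul_div_assoc', le_div_iff₀ hx0] at this
        linarith
      have h2 : 0 ≤ x ^ (-c₁) / x := by positivity
      exact mul_nonpos_of_nonneg_of_nonpos h2 h1
    have h := hanti ⟨le_refl ρ, hρ.2⟩ ⟨hρ.2, le_refl 1⟩ hρ.2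
    simp only [Real.one_rpow, hφ1, mul_one] at h
    have hpow : (0:ℝ) < ρ ^ c₁ := Real.rpow_pos_of_pos hρ0 _
    have : lam * ρ ^ c₁ ≤ φ ρ * ρ ^ (-c₁) * ρ ^ c₁ :=
      mul_le_mul_of_nonneg_right h hpow.le
    rwa [mul_assoc, ← Real.rpow_add hρ0, neg_add_cancel, Real.rpow_zero,
      mul_one] at this
  · -- upper bound: φ x * x^(-c₀) monotone
    have hmono : MonotoneOn (fun x => φ x * x ^ (-c₀)) (Set.Icc ρ 1) := by
      refine monotoneOn_of_deriv_nonneg (convex_Icc ρ 1) (hcont c₀) (hdiff c₀) ?_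
      intro x hx
      rw [interior_Icc] at hx
      have hx' := hIoo hx
      rw [key c₀ x hx']
      have hx0 : (0:ℝ) < x := hx'.1
      have h1 : 0 ≤ φ' x * x - c₀ * φ x := by
        have := hτlb x hx'
        rw [mul_div_assoc', div_le_iff₀ hx0] at this
        linarith
      have h2 : 0 ≤ x ^ (-c₀) / x := by positivity
      exact mul_nonneg h2 h1
    have h := hmono ⟨le_refl ρ, hρ.2⟩ ⟨hρ.2, le_refl 1⟩ hρ.2
    simp only [Real.one_rpow, hφ1, mul_one] at h
    have hpow : (0:ℝ) < ρ ^ c₀ := Real.rpow_pos_of_pos hρ0 _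
    have : φ ρ * ρ ^ (-c₀) * ρ ^ c₀ ≤ lam * ρ ^ c₀ :=
      mul_le_mul_of_nonneg_right h hpow.le
    rwa [mul_assoc, ← Real.rpow_add hρ0, neg_add_cancel, Real.rpow_zero,
      mul_one] at this
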